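/- Let X be a finite set of positive integers partitioned as X = X1 ∪ X2 ∪ {x_n} where x_n = max(X), and suppose Σ(X1) ≤ Σ(X2). Then |S(X1, Σ(X1))| ≤ (|S(X, Σ(X))| + 1)/2, where S(Y, t) is the set of subset sums of Y that are at most t. -/

import Mathlib

/-- `subsetSumsN X t` is the set of all subset sums of `X` (including `0`) that are at most `t`. -/
def subsetSumsN (X : Finset ℕ) (t : ℕ) : Finset ℕ :=
  (X.powerset.image fun I => ∑ x ∈ I, x).filter (· ≤ t)

lemma mem_subsetSumsN {X : Finset ℕ} {t y : ℕ} :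
    y ∈ subsetSumsN X t ↔ (∃ I ⊆ X, ∑ x ∈ I, x = y) ∧ y ≤ t := by
  simp [subsetSumsN, Finset.mem_filter, Finset.mem_image, Finset.mem_powerset]

/-- If `X = X1 ∪ X2 ∪ {xn}` is a partition with `xn = max(X)` and `Σ(X1) ≤ Σ(X2)`, then
`|S(X1, Σ(X1))| ≤ (|S(X, Σ(X))| + 1) / 2`. -/
theorem subset_sums_halving (X X1 X2 : Finset ℕ) (xn : ℕ)
    (hpos : ∀ x ∈ X, 0 < x)
    (hX : X = X1 ∪ X2 ∪ {xn}) (h12 : Disjoint X1 X2) (h1n : xn ∉ X1) (h2n : xn ∉ X2)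
    (hmax : ∀ x ∈ X, x ≤ xn)
    (hsum : ∑ x ∈ X1, x ≤ ∑ x ∈ X2, x) :
    2 * (subsetSumsN X1 (∑ x ∈ X1, x)).card ≤ (subsetSumsN X (∑ x ∈ X, x)).card + 1 := by
  classical
  set s1 := ∑ x ∈ X1, x with hs1
  set s2 := ∑ x ∈ X2, x with hs2
  set S1 := subsetSumsN X1 s1 with hS1def
  set S := subsetSumsN X (∑ x ∈ X, x) with hSdef
  have hd1n : Disjoint (X1 ∪ X2) ({xn} : Finset ℕ) := by
    simp [Finset.disjoint_singleton_right, h1n, h2n]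
  have hsumX : ∑ x ∈ X, x = s1 + s2 + xn := by
    rw [hX, Finset.sum_union hd1n, Finset.sum_union h12]
    simp
    rfl
  -- S1 as set of subset sums of X1 (the filter is vacuous)
  have hmemS1 : ∀ y, y ∈ S1 ↔ ∃ I ⊆ X1, ∑ x ∈ I, x = y := by
    intro y
    rw [hS1def, mem_subsetSumsN]
    constructor
    · rintro ⟨h, -⟩; exact h
    · rintro ⟨I, hI, rfl⟩
      exact ⟨⟨I, hI, rfl⟩, Finset.sum_le_sum_of_subset hI⟩
  have h0 : (0 : ℕ) ∈ S1 := (hmemS1 0).2 ⟨∅, by simp⟩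
  have hsub : S1 ⊆ S := by
    intro y hy
    obtain ⟨I, hI, rfl⟩ := (hmemS1 y).1 hy
    rw [hSdef, mem_subsetSumsN]
    refine ⟨⟨I, ?_, rfl⟩, ?_⟩
    · exact hI.trans (by rw [hX]; exact Finset.subset_union_left.trans Finset.subset_union_left)
    · have hh : ∑ x ∈ I, x ≤ s1 := Finset.sum_le_sum_of_subset hI
      omega
  have himg : (S1.erase 0).image (· + s2) ⊆ S \ S1 := by
    intro y hy
    obtain ⟨z, hz, rfl⟩ := Finset.mem_image.1 hy
    have hz0 : z ≠ 0 := Finset.ne_of_mem_erase hz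
    have hzS1 := Finset.mem_of_mem_erase hz
    obtain ⟨I, hI, rfl⟩ := (hmemS1 _).1 hzS1
    have hle : ∑ x ∈ I, x ≤ s1 := Finset.sum_le_sum_of_subset hI
    have hdI2 : Disjoint I X2 := Finset.disjoint_of_subset_left hI h12
    rw [Finset.mem_sdiff]
    constructor
    · rw [hSdef, mem_subsetSumsN]
      refine ⟨⟨I ∪ X2, ?_, ?_⟩, ?_⟩
      · rw [hX]
        exact (Finset.union_subset_union hI (Finset.Subset.refl X2)).trans
          Finset.subset_union_left
      · rw [Finset.sum_union hdI2]
      · omega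
    · intro hmem
      have := ((hS1def ▸ mem_subsetSumsN).1 hmem).2
      omega
  have hinj : Set.InjOn (· + s2) (S1.erase 0) := fun a _ b _ h => by
    simpa using h
  have hcard1 : (S1.erase 0).card = S1.card - 1 := Finset.card_erase_of_mem h0
  have hcard2 : ((S1.erase 0).image (· + s2)).card = S1.card - 1 := by
    rw [Finset.card_image_of_injOn hinj, hcard1]
  have hcard3 : S1.card - 1 ≤ (S \ S1).card := hcard2 ▸ Finset.card_le_card himg
  have hcard4 : (S \ S1).card = S.card - S1.card := Finset.card_sdiff_of_subset hsub
  have hS1le : S1.card ≤ S.card := Finset.card_le_card hsub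
  have hS1pos : 1 ≤ S1.card := Finset.card_pos.2 ⟨0, h0⟩
  omega
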